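/- Confluence of logical retraction: for any translated program rule rf and the kill rule, every critical pair between rf and kill is joinable: applying rf first and then exhaustively applying kill(f) and revive for the killed justification f reaches a state equivalent to the one obtained by applying kill(f) directly to the overlap. -/
import Mathlib


variable {C J : Type*} [DecidableEq C] [DecidableEq J]

/-- Annotated constraints of CHR with justifications, including the reserved
`rem` and `kill` constraints. `user c F` is a (non-reserved) constraint `c`
annotated with justification set `F`; `rem c Fc F` remembers the removed
constraint `c^{Fc}` and is itself annotated with `F`; `kill f` requests
logical retraction of justification `f`. -/
inductive AC (C J : Type*) where
  | user : C → Finset J → AC C J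
  | rem : C → Finset J → Finset J → AC C J
  | kill : J → AC C J
deriving DecidableEq

/-- The kill rule: `kill(f) \ G^F ⇔ f ∈ F | true`, for non-reserved `G`. -/
def KillStep (S T : Multiset (AC C J)) : Prop :=
  ∃ (f : J) (c : C) (F : Finset J) (G : Multiset (AC C J)),
    f ∈ F ∧ S = AC.kill f ::ₘ AC.user c F ::ₘ G ∧ T = AC.kill f ::ₘ G

/-- The revive rule: `kill(f) \ rem(G^{F_c})^F ⇔ f ∈ F | G^{F_c}`. -/
def ReviveStep (S T : Multiset (AC C J)) : Prop :=
  ∃ (f : J) (c : C) (Fc F : Finset J) (G : Multiset (AC C J)),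
    f ∈ F ∧ S = AC.kill f ::ₘ AC.rem c Fc F ::ₘ G ∧
      T = AC.kill f ::ₘ AC.user c Fc ::ₘ G

/-- A state contains at most one `kill(f)` constraint per justification `f`. -/
def AtMostOneKill (S : Multiset (AC C J)) : Prop :=
  ∀ f : J, S.count (AC.kill f) ≤ 1

/-- A simpagation rule: kept head, removed head, guard and body (no built-in
constraints in the body, no reserved symbols in the head). -/
structure Rule (C : Type*) where
  kept : Multiset C
  removed : Multiset C
  guard : Prop
  body : Multiset C

/-- Transition with the translated rule `rf` of a program rule `r`: removed
constraints are remembered via `rem`, and all produced constraints are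
annotated with the union `F` of the head justification sets. -/
def JStep (r : Rule C) (S T : Multiset (AC C J)) : Prop :=
  r.guard ∧ ∃ (K R : Multiset (C × Finset J)) (G : Multiset (AC C J)),
    K.map Prod.fst = r.kept ∧ R.map Prod.fst = r.removed ∧
    S = K.map (fun p => AC.user p.1 p.2) +
        R.map (fun p => AC.user p.1 p.2) + G ∧
    T = K.map (fun p => AC.user p.1 p.2) +
        R.map (fun p => AC.rem p.1 p.2
          ((K.map Prod.snd).sup ∪ (R.map Prod.snd).sup)) +
        r.body.map (fun b => AC.user b
          ((K.map Prod.snd).sup ∪ (R.map Prod.snd).sup)) + G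

lemma rtg_eq {α} {r : α → α → Prop} {a b a' b' : α} (ha : a = a') (hb : b = b')
    (h : Relation.ReflTransGen r a b) : Relation.ReflTransGen r a' b' := ha ▸ hb ▸ h

lemma killAll (r : Rule C) {f : J} {F : Finset J} (hf : f ∈ F)
    (B : Multiset C) (X : Multiset (AC C J)) :
    Relation.ReflTransGen
      (fun a b => JStep (J := J) r a b ∨ KillStep a b ∨ ReviveStep a b)
      (AC.kill f ::ₘ (B.map (fun b => AC.user b F) + X)) (AC.kill f ::ₘ X) := by
  induction B using Multiset.induction with
  | empty =>
    rw [Multiset.map_zero, zero_add]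
  | cons c B ih =>
    refine Relation.ReflTransGen.head (Or.inr (Or.inl ?_)) ih
    exact ⟨f, c, F, B.map (fun b => AC.user b F) + X, hf, by simp, rfl⟩

lemma reviveAll (r : Rule C) {f : J} {F : Finset J} (hf : f ∈ F)
    (R : Multiset (C × Finset J)) (X : Multiset (AC C J)) :
    Relation.ReflTransGen
      (fun a b => JStep (J := J) r a b ∨ KillStep a b ∨ ReviveStep a b)
      (AC.kill f ::ₘ (R.map (fun p => AC.rem p.1 p.2 F) + X))
      (AC.kill f ::ₘ (R.map (fun p => AC.user p.1 p.2) + X)) := by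
  induction R using Multiset.induction generalizing X with
  | empty => exact .refl
  | cons p R ih =>
    refine Relation.ReflTransGen.head
      (Or.inr (Or.inr ⟨f, p.1, p.2, F,
        R.map (fun p => AC.rem p.1 p.2 F) + X, hf, by simp, rfl⟩)) ?_
    refine rtg_eq ?_ ?_ (ih (AC.user p.1 p.2 ::ₘ X)) <;>
      · ext a
        simp only [Multiset.count_cons, Multiset.count_add, Multiset.map_cons]
        ring

/-- Confluence of logical retraction: every critical pair between a translated
program rule `rf` and the kill rule is joinable using the translated rule, the
kill rule and the revive rule (assuming at most one `kill(f)` per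
justification). -/
theorem retraction_confluent (r : Rule C) (S T₁ T₂ : Multiset (AC C J))
    (hS : AtMostOneKill S) (h₁ : JStep r S T₁) (h₂ : KillStep S T₂) :
    ∃ U₁ U₂ : Multiset (AC C J),
      Relation.ReflTransGen
        (fun a b => JStep r a b ∨ KillStep a b ∨ ReviveStep a b) T₁ U₁ ∧
      Relation.ReflTransGen
        (fun a b => JStep r a b ∨ KillStep a b ∨ ReviveStep a b) T₂ U₂ ∧
      U₁ = U₂ := by
  classical
  obtain ⟨hg, K, R, G, hK, hR, hSKR, hT₁⟩ := h₁
  obtain ⟨f, c, Fc, G₂, hfFc, hSk, hT₂⟩ := h₂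
  subst hT₁ hT₂ hSKR
  set F : Finset J := (K.map Prod.snd).sup ∪ (R.map Prod.snd).sup with hF
  -- kill f is in G
  have hkG : AC.kill f ∈ G := by
    have hmem : AC.kill f ∈ K.map (fun p => AC.user p.1 p.2) +
        R.map (fun p => AC.user p.1 p.2) + G := by
      rw [hSk]; exact Multiset.mem_cons_self _ _
    rcases Multiset.mem_add.mp hmem with h | h
    · rcases Multiset.mem_add.mp h with h | h <;> · simp at h
    · exact h
  obtain ⟨G', rfl⟩ := Multiset.exists_cons_of_mem hkG
  have hmain : AC.user c Fc ::ₘ G₂ = K.map (fun p => AC.user p.1 p.2) +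
      R.map (fun p => AC.user p.1 p.2) + G' := by
    ext a
    have := congrArg (Multiset.count a) hSk
    simp only [Multiset.count_cons, Multiset.count_add] at this ⊢
    omega
  have hucm : AC.user c Fc ∈ K.map (fun p => AC.user p.1 p.2) +
      R.map (fun p => AC.user p.1 p.2) + G' := by
    rw [← hmain]; exact Multiset.mem_cons_self _ _
  rcases Multiset.mem_add.mp hucm with huc | huc
  · rcases Multiset.mem_add.mp huc with huc | huc
    · -- overlap with a kept-head constraint
      obtain ⟨p, hpK, hpe⟩ := Multiset.mem_map.mp huc
      obtain ⟨c', Fc'⟩ := p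
      simp only [AC.user.injEq] at hpe
      obtain ⟨rfl, rfl⟩ := hpe
      have hfF : f ∈ F := by
        refine Finset.mem_union_left _ ?_
        have hle : Fc' ≤ (K.map Prod.snd).sup :=
          Multiset.le_sup (Multiset.mem_map_of_mem _ hpK)
        exact hle hfFc
      obtain ⟨K', rfl⟩ := Multiset.exists_cons_of_mem hpK
      have hG₂ : G₂ = K'.map (fun p => AC.user p.1 p.2) +
          R.map (fun p => AC.user p.1 p.2) + G' := by
        ext a
        have := congrArg (Multiset.count a) hmain
        simp only [Multiset.count_cons, Multiset.count_add,
          Multiset.map_cons] at this ⊢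
        omega
      refine ⟨AC.kill f ::ₘ G₂, AC.kill f ::ₘ G₂, ?_, .refl, rfl⟩
      -- kill the overlapped constraint in T₁
      refine Relation.ReflTransGen.head (Or.inr (Or.inl
        ⟨f, c', Fc', r.body.map (fun b => AC.user b F) +
          (R.map (fun p => AC.rem p.1 p.2 F) +
            (K'.map (fun p => AC.user p.1 p.2) + G')), hfFc, ?_, rfl⟩)) ?_
      · ext a
        simp only [Multiset.count_cons, Multiset.count_add, Multiset.map_cons]
        ring
      · refine .trans (killAll r hfF r.body _) ?_
        refine rtg_eq ?_ ?_ (reviveAll r hfF R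
          (K'.map (fun p => AC.user p.1 p.2) + G'))
        · rfl
        · rw [hG₂]
          ext a
          simp only [Multiset.count_cons, Multiset.count_add]
          ring
    · -- overlap with a removed-head constraint
      obtain ⟨p, hpR, hpe⟩ := Multiset.mem_map.mp huc
      obtain ⟨c', Fc'⟩ := p
      simp only [AC.user.injEq] at hpe
      obtain ⟨rfl, rfl⟩ := hpe
      have hfF : f ∈ F := by
        refine Finset.mem_union_right _ ?_
        have hle : Fc' ≤ (R.map Prod.snd).sup :=
          Multiset.le_sup (Multiset.mem_map_of_mem _ hpR)
        exact hle hfFc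
      obtain ⟨R', rfl⟩ := Multiset.exists_cons_of_mem hpR
      have hG₂ : G₂ = K.map (fun p => AC.user p.1 p.2) +
          R'.map (fun p => AC.user p.1 p.2) + G' := by
        ext a
        have := congrArg (Multiset.count a) hmain
        simp only [Multiset.count_cons, Multiset.count_add,
          Multiset.map_cons] at this ⊢
        omega
      refine ⟨AC.kill f ::ₘ G₂, AC.kill f ::ₘ G₂, ?_, .refl, rfl⟩
      -- revive the overlapped rem constraint, then kill it
      refine Relation.ReflTransGen.head (Or.inr (Or.inr
        ⟨f, c', Fc', F, r.body.map (fun b => AC.user b F) +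
          (R'.map (fun p => AC.rem p.1 p.2 F) +
            (K.map (fun p => AC.user p.1 p.2) + G')), hfF, ?_, rfl⟩)) ?_
      · ext a
        simp only [Multiset.count_cons, Multiset.count_add, Multiset.map_cons]
        ring
      · refine Relation.ReflTransGen.head (Or.inr (Or.inl
          ⟨f, c', Fc', r.body.map (fun b => AC.user b F) +
            (R'.map (fun p => AC.rem p.1 p.2 F) +
              (K.map (fun p => AC.user p.1 p.2) + G')), hfFc, rfl, rfl⟩)) ?_
        refine .trans (killAll r hfF r.body _) ?_
        refine rtg_eq ?_ ?_ (reviveAll r hfF R'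
          (K.map (fun p => AC.user p.1 p.2) + G'))
        · rfl
        · rw [hG₂]
          ext a
          simp only [Multiset.count_cons, Multiset.count_add]
          ring
  · -- no overlap: the killed constraint is in the context
    obtain ⟨G'', rfl⟩ := Multiset.exists_cons_of_mem huc
    have hG₂ : G₂ = K.map (fun p => AC.user p.1 p.2) +
        R.map (fun p => AC.user p.1 p.2) + G'' := by
      ext a
      have := congrArg (Multiset.count a) hmain
      simp only [Multiset.count_cons, Multiset.count_add] at this ⊢
      omega
    refine ⟨K.map (fun p => AC.user p.1 p.2) +
        R.map (fun p => AC.rem p.1 p.2 F) +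
        r.body.map (fun b => AC.user b F) + (AC.kill f ::ₘ G''),
      _, ?_, Relation.ReflTransGen.single (Or.inl
        ⟨hg, K, R, AC.kill f ::ₘ G'', hK, hR, ?_, rfl⟩), rfl⟩
    · refine Relation.ReflTransGen.single (Or.inr (Or.inl
        ⟨f, c, Fc, K.map (fun p => AC.user p.1 p.2) +
          R.map (fun p => AC.rem p.1 p.2 F) +
          r.body.map (fun b => AC.user b F) + G'', hfFc, ?_, ?_⟩)) <;>
        · ext a
          simp only [Multiset.count_cons, Multiset.count_add]
          ring
    · rw [hG₂]
      ext a
      simp only [Multiset.count_cons, Multiset.count_add]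
      ring
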